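/- Let N ∈ ℝ with N ≥ 3 and let d > 0 be real. Let K be the unique nonempty compact subset of ℝ satisfying N·K = K ∪ (K + d). Then H^s(K) = ((N−1)/d)^{−s} = (d/(N−1))^s, where s = log 2/log N is the similarity dimension of K and H^s is the s-dimensional Hausdorff measure. -/

import Mathlib

open MeasureTheory Set
open scoped ENNReal

/-- Left endpoint of the level-`n` piece of the Cantor set indexed by `w`. -/
noncomputable def cantorPt (N d : ℝ) {n : ℕ} (w : Fin n → Bool) : ℝ :=
  ∑ k : Fin n, (if w k then d else 0) / N ^ ((k : ℕ) + 1)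

lemma cantorPt_zero (N d : ℝ) (w : Fin 0 → Bool) : cantorPt N d w = 0 := by
  simp [cantorPt]

lemma cantorPt_cons (N d : ℝ) {n : ℕ} (i : Bool) (u : Fin n → Bool) :
    cantorPt N d (Fin.cons i u) = ((if i then d else 0) + cantorPt N d u) / N := by
  rw [cantorPt, Fin.sum_univ_succ]
  simp only [Fin.cons_zero, Fin.cons_succ]
  rw [cantorPt, add_div, Finset.sum_div]
  congr 1
  · norm_num
  · refine Finset.sum_congr rfl fun k _ => ?_
    rw [div_div, ← pow_succ, Fin.val_succ]

lemma cantorPt_nonneg {N d : ℝ} (hN : 0 < N) (hd : 0 ≤ d) {n : ℕ} (w : Fin n → Bool) :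
    0 ≤ cantorPt N d w := by
  refine Finset.sum_nonneg fun k _ => div_nonneg ?_ (by positivity)
  split <;> simp [hd]

lemma cantorPt_add_le {N d b : ℝ} (hN : 1 < N) (hd : 0 < d) (hb : b = d / (N - 1)) :
    ∀ {n : ℕ} (w : Fin n → Bool), cantorPt N d w + b / N ^ n ≤ b := by
  have hN0 : (0:ℝ) < N := by linarith
  have hN1 : N - 1 ≠ 0 := by intro h; rw [sub_eq_zero] at h; linarith [h.symm]
  have hNb : N * b = b + d := by
    rw [hb]; field_simp; ring
  intro n
  induction n with
  | zero => intro w; simp [cantorPt_zero]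
  | succ n ih =>
    intro w
    have hw : w = Fin.cons (w 0) (Fin.tail w) := (Fin.cons_self_tail w).symm
    rw [hw, cantorPt_cons]
    set c : ℝ := if w 0 then d else 0 with hc
    have h1 : cantorPt N d (Fin.tail w) + b / N ^ n ≤ b := ih _
    have h2 : c ≤ d := by rw [hc]; split <;> simp [hd.le]
    have hpow : (0:ℝ) < N ^ n := by positivity
    have key : (c + cantorPt N d (Fin.tail w)) / N + b / N ^ (n + 1)
        = (c + (cantorPt N d (Fin.tail w) + b / N ^ n)) / N := by
      rw [pow_succ]
      field_simp
      ring
    rw [key, div_le_iff₀ hN0]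
    nlinarith [h1, h2]
/-- The key counting lemma: the number of level-`n` pieces contained in an interval
`[c₁, c₂]` is at most `2^n ((c₂ - c₁)/b)^s`. -/
lemma cantor_count {N d b s : ℝ} (hN : 3 ≤ N) (hd : 0 < d) (hb : b = d / (N - 1))
    (hs0 : 0 < s) (hs1 : s < 1) (hNs : N ^ s = (2:ℝ)) :
    ∀ (n : ℕ) (c₁ c₂ : ℝ), c₁ ≤ c₂ →
      ∀ F : Finset (Fin n → Bool),
        (∀ w ∈ F, Set.Icc (cantorPt N d w) (cantorPt N d w + b / N ^ n) ⊆ Set.Icc c₁ c₂) →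
        (F.card : ℝ) ≤ 2 ^ n * ((c₂ - c₁) / b) ^ s := by
  classical
  have hN1 : (1:ℝ) < N := by linarith
  have hN0 : (0:ℝ) < N := by linarith
  have hb0 : 0 < b := by rw [hb]; exact div_pos hd (by linarith)
  have hNe : N - 1 ≠ 0 := by intro h; rw [sub_eq_zero] at h; linarith [h.symm]
  have hNb : N * b = b + d := by rw [hb]; field_simp; ring
  have hdb : d - b = (N - 2) * b := by nlinarith
  intro n
  induction n with
  | zero =>
    intro c₁ c₂ hc F hF
    have hrpos : (0:ℝ) ≤ ((c₂ - c₁) / b) ^ s :=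
      Real.rpow_nonneg (div_nonneg (by linarith) hb0.le) s
    rcases F.eq_empty_or_nonempty with rfl | ⟨w, hw⟩
    · simpa using mul_nonneg (by norm_num : (0:ℝ) ≤ 2 ^ 0) hrpos
    · have hsub := hF w hw
      rw [cantorPt_zero] at hsub
      have h0 : (0:ℝ) ∈ Set.Icc c₁ c₂ := hsub ⟨le_rfl, by simpa using hb0.le⟩
      have h1 : (0:ℝ) + b / N ^ 0 ∈ Set.Icc c₁ c₂ := hsub ⟨by simpa using hb0.le, le_rfl⟩
      simp only [pow_zero, div_one, zero_add] at h1
      have hcb : 1 ≤ (c₂ - c₁) / b := by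
        rw [le_div_iff₀ hb0]
        have := h0.1; have := h1.2
        linarith
      have hcard : F.card ≤ 1 := by
        calc F.card ≤ Fintype.card (Fin 0 → Bool) := F.card_le_univ
        _ = 1 := by simp
      calc (F.card : ℝ) ≤ 1 := by exact_mod_cast hcard
      _ ≤ 2 ^ 0 * ((c₂ - c₁) / b) ^ s := by
          simpa using Real.one_le_rpow hcb hs0.le
  | succ n ih =>
    intro c₁ c₂ hc F hF
    have hpow : (0:ℝ) < N ^ n := by positivity
    have h22 : (0:ℝ) < 2 ^ (n+1) := by positivity
    set m : Bool → ℝ := fun i => max c₁ ((if i then d else 0) / N) with hm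
    set M : Bool → ℝ := fun i => min c₂ (((if i then d else 0) + b) / N) with hM
    have branch : ∀ i : Bool, ∀ w ∈ F, w 0 = i →
        Set.Icc (cantorPt N d (Fin.tail w)) (cantorPt N d (Fin.tail w) + b / N ^ n) ⊆
          Set.Icc (N * m i - (if i then d else 0)) (N * M i - (if i then d else 0)) := by
      intro i w hw hwi
      set c : ℝ := if i then d else 0 with hcdef
      have hc0 : 0 ≤ c := by rw [hcdef]; split <;> simp [hd.le]
      set E : ℝ := cantorPt N d (Fin.tail w) with hE
      have hwE : cantorPt N d w = (c + E) / N := by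
        conv_lhs => rw [← Fin.cons_self_tail w]
        rw [cantorPt_cons, hwi, hE, hcdef]
      have hNpow : N * (b / N ^ (n+1)) = b / N ^ n := by
        rw [pow_succ]; field_simp
      have hlen : (0:ℝ) ≤ b / N ^ (n+1) := by positivity
      have hsub := hF w hw
      have hmemL := hsub ⟨le_rfl, by linarith⟩
      have hmemR := hsub ⟨by linarith, le_rfl⟩
      rw [hwE] at hmemL hmemR
      have htail0 : 0 ≤ E := cantorPt_nonneg hN0 hd.le _
      have htailb : E + b / N ^ n ≤ b := cantorPt_add_le hN1 hd hb _
      have hNdiv : N * ((c + E) / N) = c + E := by field_simp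
      have h1 : m i ≤ (c + E) / N := by
        refine max_le hmemL.1 ?_
        rw [hcdef] at *
        exact (div_le_div_iff_of_pos_right hN0).mpr (by linarith)
      have h2 : (c + E) / N + b / N ^ (n+1) ≤ M i := by
        refine le_min hmemR.2 ?_
        have hq : (c + E) / N + b / N ^ (n+1) = (c + (E + b / N ^ n)) / N := by
          rw [pow_succ]; field_simp; ring
        rw [hq]
        exact (div_le_div_iff_of_pos_right hN0).mpr (by linarith)
      apply Set.Icc_subset_Icc
      · have := mul_le_mul_of_nonneg_left h1 hN0.le
        rw [hNdiv] at this
        linarith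
      · have := mul_le_mul_of_nonneg_left h2 hN0.le
        rw [mul_add, hNdiv, hNpow] at this
        linarith
    -- the branch counting bound
    have key : ∀ i : Bool, (F.filter (fun w => w 0 = i)).Nonempty →
        0 ≤ M i - m i ∧
        ((F.filter (fun w => w 0 = i)).card : ℝ) ≤ 2 ^ (n+1) * ((M i - m i) / b) ^ s := by
      intro i hne
      obtain ⟨w₀, hw₀⟩ := hne
      rw [Finset.mem_filter] at hw₀
      set c : ℝ := if i then d else 0 with hcdef
      have hmM : m i ≤ M i := by
        have h := branch i w₀ hw₀.1 hw₀.2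
        have hx := h ⟨le_rfl, le_add_of_nonneg_right (by positivity)⟩
        have := hx.1; have := hx.2
        have hNm : N * m i ≤ N * M i := by
          rw [← hcdef] at *
          linarith [cantorPt_nonneg hN0 hd.le (Fin.tail w₀),
            cantorPt_add_le hN1 hd hb (Fin.tail w₀)]
        exact le_of_mul_le_mul_left hNm hN0
      refine ⟨by linarith, ?_⟩
      set G := (F.filter (fun w => w 0 = i)).image Fin.tail with hG
      have hcard : G.card = (F.filter (fun w => w 0 = i)).card := by
        apply Finset.card_image_of_injOn
        intro w hw w' hw' h
        rw [Finset.mem_coe, Finset.mem_filter] at hw hw'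
        rw [← Fin.cons_self_tail w, ← Fin.cons_self_tail w', hw.2, hw'.2, h]
      have hGsub : ∀ u ∈ G, Set.Icc (cantorPt N d u) (cantorPt N d u + b / N ^ n) ⊆
          Set.Icc (N * m i - c) (N * M i - c) := by
        intro u hu
        rw [hG, Finset.mem_image] at hu
        obtain ⟨w, hw, rfl⟩ := hu
        rw [Finset.mem_filter] at hw
        rw [hcdef]
        exact branch i w hw.1 hw.2
      have hc' : N * m i - c ≤ N * M i - c := by
        have := mul_le_mul_of_nonneg_left hmM hN0.le
        linarith
      have hih := ih (N * m i - c) (N * M i - c) hc' G hGsub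
      rw [hcard] at hih
      have harg : (N * M i - c - (N * m i - c)) / b = N * ((M i - m i) / b) := by
        field_simp; ring
      rw [harg, Real.mul_rpow hN0.le (div_nonneg (by linarith) hb0.le), hNs] at hih
      calc ((F.filter (fun w => w 0 = i)).card : ℝ)
          ≤ 2 ^ n * (2 * ((M i - m i) / b) ^ s) := hih
        _ = 2 ^ (n+1) * ((M i - m i) / b) ^ s := by ring
    -- split the cardinality
    have hsplit : (F.card : ℝ) = ((F.filter (fun w => w 0 = false)).card : ℝ)
        + ((F.filter (fun w => w 0 = true)).card : ℝ) := by
      have h := Finset.card_filter_add_card_filter_not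
        (s := F) (p := fun w => w 0 = false)
      simp only [Bool.not_eq_false] at h
      exact_mod_cast h.symm
    have hrng : (0:ℝ) ≤ (c₂ - c₁) / b := div_nonneg (by linarith) hb0.le
    have hrpos : (0:ℝ) ≤ ((c₂ - c₁) / b) ^ s := Real.rpow_nonneg hrng s
    -- simple bounds on the windows
    have hm0 : m false = max c₁ 0 := by simp [hm]
    have hM0 : M false = min c₂ (b / N) := by simp [hM]
    have hm1 : m true = max c₁ (d / N) := by simp [hm]
    have hM1 : M true = min c₂ ((d + b) / N) := by simp [hM]
    have honesided : ∀ i : Bool, (F.filter (fun w => w 0 = i)).Nonempty →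
        ((F.filter (fun w => w 0 = i)).card : ℝ) ≤ 2 ^ (n+1) * ((c₂ - c₁) / b) ^ s := by
      intro i hne
      obtain ⟨hai, hcardi⟩ := key i hne
      have hle : M i - m i ≤ c₂ - c₁ := by
        have h1 : M i ≤ c₂ := min_le_left _ _
        have h2 : c₁ ≤ m i := le_max_left _ _
        linarith
      have : ((M i - m i) / b) ^ s ≤ ((c₂ - c₁) / b) ^ s := by
        apply Real.rpow_le_rpow (div_nonneg hai hb0.le) ?_ hs0.le
        exact (div_le_div_iff_of_pos_right hb0).mpr hle
      calc ((F.filter (fun w => w 0 = i)).card : ℝ)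
          ≤ 2 ^ (n+1) * ((M i - m i) / b) ^ s := hcardi
        _ ≤ 2 ^ (n+1) * ((c₂ - c₁) / b) ^ s := by
            exact mul_le_mul_of_nonneg_left this h22.le
    rcases (F.filter (fun w => w 0 = false)).eq_empty_or_nonempty with h0e | h0ne
    · rcases (F.filter (fun w => w 0 = true)).eq_empty_or_nonempty with h1e | h1ne
      · rw [hsplit, h0e, h1e]
        simpa using mul_nonneg h22.le hrpos
      · rw [hsplit, h0e]
        simpa using honesided true h1ne
    · rcases (F.filter (fun w => w 0 = true)).eq_empty_or_nonempty with h1e | h1ne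
      · rw [hsplit, h1e]
        simpa using honesided false h0ne
      · -- both branches are nonempty: use concavity of `x ^ s`
        obtain ⟨ha0, hcard0⟩ := key false h0ne
        obtain ⟨ha1, hcard1⟩ := key true h1ne
        set A0 := M false - m false with hA0
        set A1 := M true - m true with hA1
        have hub0 : A0 * N ≤ b := by
          have h1 : M false ≤ b / N := by rw [hM0]; exact min_le_right _ _
          have h2 : (0:ℝ) ≤ m false := by rw [hm0]; exact le_max_right _ _
          have := (div_le_div_iff_of_pos_right hN0).mpr ((le_refl b))
          rw [hA0, ← le_div_iff₀ hN0]
          linarith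
        have hub1 : A1 * N ≤ b := by
          have h1 : M true ≤ (d + b) / N := by rw [hM1]; exact min_le_right _ _
          have h2 : d / N ≤ m true := by rw [hm1]; exact le_max_right _ _
          have h3 : (d + b) / N - d / N = b / N := by ring
          rw [hA1, ← le_div_iff₀ hN0]
          linarith
        have hga : (A0 + c₁) * N ≤ b := by
          have h1 : M false ≤ b / N := by rw [hM0]; exact min_le_right _ _
          have h2 : c₁ ≤ m false := by rw [hm0]; exact le_max_left _ _
          rw [← le_div_iff₀ hN0]
          rw [hA0]; linarith
        have hgb : A1 * N ≤ c₂ * N - d := by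
          have h3 : M true ≤ c₂ := by rw [hM1]; exact min_le_left _ _
          have h4 : d / N ≤ m true := by rw [hm1]; exact le_max_right _ _
          have h5 : d / N * N = d := by field_simp
          have h6 : A1 ≤ c₂ - d / N := by rw [hA1]; linarith
          calc A1 * N ≤ (c₂ - d / N) * N := by
                exact mul_le_mul_of_nonneg_right h6 hN0.le
            _ = c₂ * N - d := by rw [sub_mul, h5]
        clear_value A0 A1
        have hsum : N * (A0 + A1) ≤ 2 * (c₂ - c₁) := by
          nlinarith [mul_nonneg (by linarith : (0:ℝ) ≤ N - 2)
            (by linarith : (0:ℝ) ≤ 2 * b - N * (A0 + A1)), hga, hgb, hdb, hN0]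
        have hcc := (Real.concaveOn_rpow hs0.le hs1.le).2
          (Set.mem_Ici.mpr (div_nonneg ha0 hb0.le))
          (Set.mem_Ici.mpr (div_nonneg ha1 hb0.le))
          (by norm_num : (0:ℝ) ≤ 1/2) (by norm_num : (0:ℝ) ≤ 1/2) (by norm_num)
        simp only [smul_eq_mul] at hcc
        have hmid : (1/2 : ℝ) * (A0 / b) + (1/2) * (A1 / b) = (A0 + A1) / (2 * b) := by ring
        rw [hmid] at hcc
        have hmono : ((A0 + A1) / (2 * b)) ^ s ≤ ((c₂ - c₁) / b / N) ^ s := by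
          apply Real.rpow_le_rpow (by positivity) ?_ hs0.le
          rw [div_div, div_le_div_iff₀ (by positivity) (by positivity)]
          calc (A0 + A1) * (b * N) = b * (N * (A0 + A1)) := by ring
            _ ≤ b * (2 * (c₂ - c₁)) := mul_le_mul_of_nonneg_left hsum hb0.le
            _ = (c₂ - c₁) * (2 * b) := by ring
        have hsplit2 : ((c₂ - c₁) / b / N) ^ s = ((c₂ - c₁) / b) ^ s / 2 := by
          rw [Real.div_rpow hrng hN0.le, hNs]
        rw [hsplit2] at hmono
        have hfin : ((F.filter (fun w => w 0 = false)).card : ℝ)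
            + ((F.filter (fun w => w 0 = true)).card : ℝ)
            ≤ 2 ^ (n+1) * (A0 / b) ^ s + 2 ^ (n+1) * (A1 / b) ^ s := add_le_add hcard0 hcard1
        have hkey2 : (A0 / b) ^ s + (A1 / b) ^ s ≤ ((c₂ - c₁) / b) ^ s := by linarith
        rw [hsplit]
        calc ((F.filter (fun w => w 0 = false)).card : ℝ)
            + ((F.filter (fun w => w 0 = true)).card : ℝ)
            ≤ 2 ^ (n+1) * (A0 / b) ^ s + 2 ^ (n+1) * (A1 / b) ^ s := hfin
          _ = 2 ^ (n+1) * ((A0 / b) ^ s + (A1 / b) ^ s) := by ring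
          _ ≤ 2 ^ (n+1) * ((c₂ - c₁) / b) ^ s := mul_le_mul_of_nonneg_left hkey2 h22.le
/-- Real-number subadditivity of `x ^ s` for `0 ≤ s ≤ 1`. -/
lemma real_rpow_add_le {x y p : ℝ} (hx : 0 ≤ x) (hy : 0 ≤ y) (hp0 : 0 ≤ p) (hp1 : p ≤ 1) :
    (x + y) ^ p ≤ x ^ p + y ^ p := by
  have h := NNReal.rpow_add_le_add_rpow x.toNNReal y.toNNReal hp0 hp1
  have hxy : (x.toNNReal + y.toNNReal) = (x + y).toNNReal := (Real.toNNReal_add hx hy).symm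
  rw [hxy] at h
  have h' := NNReal.coe_le_coe.mpr h
  rw [NNReal.coe_add, NNReal.coe_rpow, NNReal.coe_rpow, NNReal.coe_rpow,
    Real.coe_toNNReal _ hx, Real.coe_toNNReal _ hy, Real.coe_toNNReal _ (by linarith)] at h'
  exact h'

open Filter in
/-- **Proposition.** Let `N ≥ 3` be real and `d > 0`, and let `K` be the unique nonempty
compact subset of `ℝ` satisfying `N·K = K ∪ (K + d)`. Then
`H^s(K) = ((N−1)/d)^{−s} = (d/(N−1))^s`, where `s = log 2 / log N` is the similarity
dimension of `K`. -/
theorem hausdorff_measure_cantor (N d : ℝ) (hN : 3 ≤ N) (hd : 0 < d)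
    (K : Set ℝ) (hKc : IsCompact K) (hKne : K.Nonempty)
    (hK : (fun x => N * x) '' K = K ∪ (fun x => x + d) '' K)
    (s : ℝ) (hs : s = Real.log 2 / Real.log N) :
    Measure.hausdorffMeasure s K = ENNReal.ofReal ((d / (N - 1)) ^ s) := by
  classical
  have hN1 : (1:ℝ) < N := by linarith
  have hN0 : (0:ℝ) < N := by linarith
  set b : ℝ := d / (N - 1) with hb
  have hb0 : 0 < b := div_pos hd (by linarith)
  have hlog2 : (0:ℝ) < Real.log 2 := Real.log_pos one_lt_two
  have hlogN : (0:ℝ) < Real.log N := Real.log_pos hN1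
  have hs0 : 0 < s := hs ▸ div_pos hlog2 hlogN
  have hs1 : s < 1 := by
    rw [hs, div_lt_one hlogN]
    exact Real.log_lt_log two_pos (by linarith)
  have hNs : N ^ s = (2:ℝ) := by
    have hq : Real.log N * (Real.log 2 / Real.log N) = Real.log 2 := by
      field_simp
    rw [hs, Real.rpow_def_of_pos hN0, hq, Real.exp_log two_pos]
  -- structural facts about K
  have hmem0 : ∀ x ∈ K, x / N ∈ K := by
    intro x hx
    have : x ∈ (fun x => N * x) '' K := hK ▸ Set.mem_union_left _ hx
    obtain ⟨y, hy, hxy⟩ := this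
    have : y = x / N := by field_simp [← hxy]; simp only at hxy; rw [← hxy]; ring
    exact this ▸ hy
  have hmem1 : ∀ x ∈ K, (x + d) / N ∈ K := by
    intro x hx
    have : x + d ∈ (fun x => N * x) '' K := by
      rw [hK]; exact Set.mem_union_right _ ⟨x, hx, rfl⟩
    obtain ⟨y, hy, hxy⟩ := this
    have : y = (x + d) / N := by field_simp [← hxy]; simp only at hxy; rw [← hxy]; ring
    exact this ▸ hy
  have hdicho : ∀ x ∈ K, N * x ∈ K ∨ N * x - d ∈ K := by
    intro x hx
    have : N * x ∈ K ∪ (fun x => x + d) '' K := hK ▸ ⟨x, hx, rfl⟩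
    rcases this with h | ⟨y, hy, hxy⟩
    · exact Or.inl h
    · right; simpa [← hxy] using hy
  have hK0 : ∀ x ∈ K, 0 ≤ x := by
    have hAK : sInf K ∈ K := hKc.sInf_mem hKne
    have hA : 0 ≤ sInf K := by
      rcases hdicho _ hAK with h | h
      · have := csInf_le hKc.bddBelow h
        nlinarith
      · have := csInf_le hKc.bddBelow h
        nlinarith
    exact fun x hx => le_trans hA (csInf_le hKc.bddBelow hx)
  have hKb : ∀ x ∈ K, x ≤ b := by
    have hBK : sSup K ∈ K := hKc.sSup_mem hKne
    have hB : sSup K ≤ b := by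
      rcases hdicho _ hBK with h | h
      · have := le_csSup hKc.bddAbove h
        nlinarith
      · have h2 := le_csSup hKc.bddAbove h
        have : sSup K * (N - 1) ≤ d := by nlinarith
        rw [hb, le_div_iff₀ (by linarith : (0:ℝ) < N - 1)]
        linarith
    exact fun x hx => le_trans (le_csSup hKc.bddAbove hx) hB
  -- every piece meets K
  have hne_piece : ∀ (n : ℕ) (w : Fin n → Bool),
      ∃ x ∈ K, x ∈ Set.Icc (cantorPt N d w) (cantorPt N d w + b / N ^ n) := by
    intro n
    induction n with
    | zero =>
      intro w
      obtain ⟨x, hx⟩ := hKne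
      exact ⟨x, hx, by
        rw [cantorPt_zero]
        exact ⟨hK0 x hx, by simpa using hKb x hx⟩⟩
    | succ n ih =>
      intro w
      obtain ⟨x, hxK, hxJ⟩ := ih (Fin.tail w)
      set c : ℝ := if w 0 then d else 0 with hcdef
      have hcd : 0 ≤ c ∧ c ≤ d := by rw [hcdef]; split <;> constructor <;> simp [hd.le]
      refine ⟨(x + c) / N, ?_, ?_⟩
      · rw [hcdef]
        rcases Bool.eq_false_or_eq_true (w 0) with h | h <;> rw [h]
        · simpa using hmem1 x hxK
        · simpa using hmem0 x hxK
      · have hE : cantorPt N d w = (c + cantorPt N d (Fin.tail w)) / N := by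
          conv_lhs => rw [← Fin.cons_self_tail w]
          rw [cantorPt_cons, hcdef]
        have hq : (c + cantorPt N d (Fin.tail w)) / N + b / N ^ (n+1)
            = (c + (cantorPt N d (Fin.tail w) + b / N ^ n)) / N := by
          rw [pow_succ]; field_simp; ring
        constructor
        · rw [hE]
          exact (div_le_div_iff_of_pos_right hN0).mpr (by linarith [hxJ.1])
        · rw [hE, hq]
          exact (div_le_div_iff_of_pos_right hN0).mpr (by linarith [hxJ.2])
  -- K is covered by the pieces at each level
  have hcov : ∀ n : ℕ, K ⊆ ⋃ w : Fin n → Bool,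
      Set.Icc (cantorPt N d w) (cantorPt N d w + b / N ^ n) := by
    intro n
    induction n with
    | zero =>
      intro x hx
      refine Set.mem_iUnion.mpr ⟨fun _ => false, ?_⟩
      rw [cantorPt_zero]
      exact ⟨hK0 x hx, by simpa using hKb x hx⟩
    | succ n ih =>
      intro x hx
      rcases hdicho x hx with h | h
      · obtain ⟨u, hu⟩ := Set.mem_iUnion.mp (ih h)
        refine Set.mem_iUnion.mpr ⟨Fin.cons false u, ?_⟩
        rw [cantorPt_cons]
        simp only [if_neg (Bool.false_ne_true), zero_add]
        have hq : cantorPt N d u / N + b / N ^ (n+1) = (cantorPt N d u + b / N ^ n) / N := by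
          rw [pow_succ]; field_simp
        constructor
        · rw [div_le_iff₀ hN0]; linarith [hu.1, mul_comm x N]
        · rw [hq, le_div_iff₀ hN0]; linarith [hu.2, mul_comm x N]
      · obtain ⟨u, hu⟩ := Set.mem_iUnion.mp (ih h)
        refine Set.mem_iUnion.mpr ⟨Fin.cons true u, ?_⟩
        rw [cantorPt_cons]
        simp only [eq_self_iff_true, if_true]
        have hq : (d + cantorPt N d u) / N + b / N ^ (n+1)
            = (d + (cantorPt N d u + b / N ^ n)) / N := by
          rw [pow_succ]; field_simp; ring
        constructor
        · rw [div_le_iff₀ hN0]; linarith [hu.1, mul_comm x N]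
        · rw [hq, le_div_iff₀ hN0]; linarith [hu.2, mul_comm x N]
  have htend : Filter.Tendsto (fun n : ℕ => b / N ^ n) Filter.atTop (nhds 0) := by
    have h1 : Filter.Tendsto (fun n : ℕ => (N⁻¹) ^ n) Filter.atTop (nhds 0) :=
      tendsto_pow_atTop_nhds_zero_of_lt_one (by positivity) (by
        rw [inv_lt_one_iff₀]; right; exact hN1)
    have h2 := h1.const_mul b
    rw [mul_zero] at h2
    refine h2.congr fun n => ?_
    rw [div_eq_mul_inv, inv_pow]
  apply le_antisymm
  · -- upper bound via the natural coverings
    have hle := MeasureTheory.Measure.hausdorffMeasure_le_liminf_sum s K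
      (l := Filter.atTop) (fun n => ENNReal.ofReal (b / N ^ n))
      (by
        rw [← ENNReal.ofReal_zero]
        exact (ENNReal.continuous_ofReal.tendsto 0).comp htend)
      (fun n (w : Fin n → Bool) => Set.Icc (cantorPt N d w) (cantorPt N d w + b / N ^ n))
      (Filter.Eventually.of_forall fun n => by
        intro w
        rw [Real.ediam_Icc, add_sub_cancel_left])
      (Filter.Eventually.of_forall hcov)
    refine le_trans hle ?_
    have hsum : ∀ n : ℕ, (∑ w : Fin n → Bool,
        Metric.ediam (Set.Icc (cantorPt N d w) (cantorPt N d w + b / N ^ n)) ^ s)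
        = ENNReal.ofReal (b ^ s) := by
      intro n
      have hterm : ∀ w : Fin n → Bool,
          Metric.ediam (Set.Icc (cantorPt N d w) (cantorPt N d w + b / N ^ n)) ^ s
          = ENNReal.ofReal (b ^ s / 2 ^ n) := by
        intro w
        rw [Real.ediam_Icc, add_sub_cancel_left,
          ENNReal.ofReal_rpow_of_pos (by positivity)]
        congr 1
        rw [Real.div_rpow hb0.le (by positivity)]
        congr 1
        rw [← Real.rpow_natCast_mul hN0.le, mul_comm, Real.rpow_mul_natCast hN0.le, hNs]
      rw [Finset.sum_congr rfl (fun w _ => hterm w), Finset.sum_const]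
      have hcard : (Finset.univ : Finset (Fin n → Bool)).card = 2 ^ n := by
        simp [Finset.card_univ]
      rw [hcard, nsmul_eq_mul]
      rw [show ((2 ^ n : ℕ) : ℝ≥0∞) = ENNReal.ofReal ((2:ℝ) ^ n) by
        rw [ENNReal.ofReal_pow (by norm_num)]; norm_num]
      rw [← ENNReal.ofReal_mul (by positivity)]
      congr 1
      field_simp
    calc Filter.liminf (fun n : ℕ => ∑ w : Fin n → Bool,
          Metric.ediam (Set.Icc (cantorPt N d w) (cantorPt N d w + b / N ^ n)) ^ s)
          Filter.atTop
        = Filter.liminf (fun _ : ℕ => ENNReal.ofReal (b ^ s)) Filter.atTop := by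
          congr 1; funext n; exact hsum n
      _ = ENNReal.ofReal (b ^ s) := Filter.liminf_const _
      _ ≤ ENNReal.ofReal (b ^ s) := le_rfl
  · -- lower bound
    rw [MeasureTheory.Measure.hausdorffMeasure_apply]
    refine le_iSup₂_of_le 1 one_pos ?_
    refine le_iInf fun t => le_iInf fun hcovK => le_iInf fun hdiam => ?_
    have hterm : ∀ n, (⨆ _ : (t n).Nonempty, Metric.ediam (t n) ^ s) = Metric.ediam (t n) ^ s := by
      intro n
      rcases (t n).eq_empty_or_nonempty with he | hne
      · rw [he]
        simp [Metric.ediam_empty, ENNReal.zero_rpow_of_pos hs0]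
      · exact iSup_pos hne
    have htsum : (∑' n, ⨆ _ : (t n).Nonempty, Metric.ediam (t n) ^ s)
        = ∑' n, Metric.ediam (t n) ^ s := tsum_congr hterm
    rw [htsum]
    apply ENNReal.le_of_forall_pos_le_add
    intro ε hε _
    have hεr0 : (0:ℝ) < (ε : ℝ) := hε
    set εr : ℝ := (ε : ℝ) with hεr
    set δ : ℕ → ℝ := fun n => ((εr * 2⁻¹ ^ (n+1)) ^ s⁻¹) / 2 with hδ
    have hδ0 : ∀ n, 0 < δ n := fun n => by rw [hδ]; positivity
    have h2δ : ∀ n, (2 * δ n) ^ s = εr * 2⁻¹ ^ (n+1) := by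
      intro n
      have hq : 2 * δ n = (εr * 2⁻¹ ^ (n+1)) ^ s⁻¹ := by rw [hδ]; ring
      rw [hq, Real.rpow_inv_rpow (by positivity) hs0.ne']
    set D : ℕ → ℝ := fun n => (Metric.ediam (t n)).toReal with hD
    have hD0 : ∀ n, 0 ≤ D n := fun n => ENNReal.toReal_nonneg
    have hDdiam : ∀ n, Metric.ediam (t n) = ENNReal.ofReal (D n) := fun n =>
      (ENNReal.ofReal_toReal ((hdiam n).trans_lt ENNReal.one_lt_top).ne).symm
    set I : ℕ → Set ℝ := fun n => Set.Ioo (sInf (t n) - δ n) (sInf (t n) + D n + δ n) with hI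
    have htI : ∀ n, t n ⊆ I n := by
      intro n x hx
      have hbdd : Bornology.IsBounded (t n) :=
        Metric.isBounded_iff_ediam_ne_top.mpr ((hdiam n).trans_lt ENNReal.one_lt_top).ne
      have h1 : sInf (t n) ≤ x := csInf_le hbdd.bddBelow hx
      have h2 : x ≤ sInf (t n) + D n := by
        have hlb : ∀ y ∈ t n, x - D n ≤ y := by
          intro y hy
          have hxy := Metric.dist_le_diam_of_mem hbdd hx hy
          rw [Real.dist_eq] at hxy
          have : Metric.diam (t n) = D n := rfl
          rw [this] at hxy
          have := le_abs_self (x - y)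
          linarith
        have := le_csInf ⟨x, hx⟩ hlb
        linarith
      exact ⟨by linarith [hδ0 n], by linarith [hδ0 n]⟩
    have hKI : K ⊆ ⋃ n, I n := hcovK.trans (Set.iUnion_mono htI)
    obtain ⟨δL, hδL, hball⟩ := lebesgue_number_lemma_of_metric hKc (fun n => isOpen_Ioo) hKI
    obtain ⟨n₀, hn₀⟩ := ((tendsto_order.1 htend).2 δL hδL).exists
    have hg : ∀ w : Fin n₀ → Bool,
        ∃ n, Set.Icc (cantorPt N d w) (cantorPt N d w + b / N ^ n₀) ⊆ I n := by
      intro w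
      obtain ⟨x, hxK, hxJ⟩ := hne_piece n₀ w
      obtain ⟨n, hn⟩ := hball x hxK
      refine ⟨n, fun y hy => hn ?_⟩
      rw [Metric.mem_ball, Real.dist_eq, abs_lt]
      have h1 := hxJ.1; have h2 := hxJ.2
      have h3 := hy.1; have h4 := hy.2
      constructor <;> linarith [hn₀]
    choose g hgs using hg
    set T : Finset ℕ := Finset.univ.image g with hT
    have hcards : ((2:ℝ) ^ n₀) ≤
        ∑ n ∈ T, (((Finset.univ.filter (fun w : Fin n₀ → Bool => g w = n))).card : ℝ) := by
      have hcf := Finset.card_eq_sum_card_fiberwise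
        (f := g) (s := Finset.univ) (t := T)
        (fun w _ => Finset.mem_image_of_mem g (Finset.mem_univ w))
      have hcu : (Finset.univ : Finset (Fin n₀ → Bool)).card = 2 ^ n₀ := by
        simp [Finset.card_univ]
      rw [hcu] at hcf
      exact le_of_eq (by exact_mod_cast hcf)
    have hfiber : ∀ n ∈ T,
        ((Finset.univ.filter (fun w : Fin n₀ → Bool => g w = n)).card : ℝ)
          ≤ 2 ^ n₀ * ((D n + 2 * δ n) / b) ^ s := by
      intro n _
      have hlo : sInf (t n) - δ n ≤ sInf (t n) + D n + δ n := by
        linarith [hδ0 n, hD0 n]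
      have hsub : ∀ w ∈ Finset.univ.filter (fun w : Fin n₀ → Bool => g w = n),
          Set.Icc (cantorPt N d w) (cantorPt N d w + b / N ^ n₀) ⊆
            Set.Icc (sInf (t n) - δ n) (sInf (t n) + D n + δ n) := by
        intro w hw
        rw [Finset.mem_filter] at hw
        have := (hgs w).trans Set.Ioo_subset_Icc_self
        rw [hw.2] at this
        exact this
      have hcnt := cantor_count hN hd hb hs0 hs1 hNs n₀
        (sInf (t n) - δ n) (sInf (t n) + D n + δ n) hlo
        (Finset.univ.filter (fun w => g w = n)) hsub
      have harg : sInf (t n) + D n + δ n - (sInf (t n) - δ n) = D n + 2 * δ n := by ring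
      rw [harg] at hcnt
      exact hcnt
    have hb_s : 0 < b ^ s := Real.rpow_pos_of_pos hb0 s
    have hsum1 : (1:ℝ) ≤ ∑ n ∈ T, ((D n + 2 * δ n) / b) ^ s := by
      have h1 : ((2:ℝ) ^ n₀) ≤ ∑ n ∈ T, 2 ^ n₀ * ((D n + 2 * δ n) / b) ^ s :=
        hcards.trans (Finset.sum_le_sum hfiber)
      rw [← Finset.mul_sum] at h1
      have h2 : (0:ℝ) < 2 ^ n₀ := by positivity
      have h3 : (2:ℝ) ^ n₀ * 1 ≤ 2 ^ n₀ * ∑ n ∈ T, ((D n + 2 * δ n) / b) ^ s := by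
        linarith
      exact le_of_mul_le_mul_left h3 h2
    have hsum2 : b ^ s ≤ ∑ n ∈ T, (D n + 2 * δ n) ^ s := by
      have hcg : ∀ n ∈ T, ((D n + 2 * δ n) / b) ^ s = (D n + 2 * δ n) ^ s / b ^ s :=
        fun n _ => Real.div_rpow (by linarith [hD0 n, (hδ0 n).le]) hb0.le s
      rw [Finset.sum_congr rfl hcg, ← Finset.sum_div, le_div_iff₀ hb_s] at hsum1
      linarith
    have hsum3 : b ^ s ≤ (∑ n ∈ T, (D n) ^ s) + εr := by
      have h1 : ∀ n ∈ T, (D n + 2 * δ n) ^ s ≤ (D n) ^ s + εr * 2⁻¹ ^ (n+1) := by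
        intro n _
        calc (D n + 2 * δ n) ^ s ≤ (D n) ^ s + (2 * δ n) ^ s :=
              real_rpow_add_le (hD0 n) (by linarith [hδ0 n]) hs0.le hs1.le
          _ = (D n) ^ s + εr * 2⁻¹ ^ (n+1) := by rw [h2δ n]
      have h2 : ∑ n ∈ T, εr * 2⁻¹ ^ (n+1) ≤ εr := by
        rw [← Finset.mul_sum]
        have h3 : ∑ n ∈ T, (2⁻¹:ℝ) ^ (n+1) ≤ 1 := by
          have hsub2 : T ⊆ Finset.range (T.sup id + 1) := fun n hn =>
            Finset.mem_range.mpr (Nat.lt_succ_of_le (Finset.le_sup (f := id) hn))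
          calc ∑ n ∈ T, (2⁻¹:ℝ) ^ (n+1)
              ≤ ∑ n ∈ Finset.range (T.sup id + 1), (2⁻¹:ℝ) ^ (n+1) :=
                Finset.sum_le_sum_of_subset_of_nonneg hsub2 (fun i _ _ => by positivity)
            _ = 2⁻¹ * ∑ n ∈ Finset.range (T.sup id + 1), (2⁻¹:ℝ) ^ n := by
                rw [Finset.mul_sum]
                exact Finset.sum_congr rfl fun i _ => by rw [pow_succ]; ring
            _ ≤ 2⁻¹ * 2 := by
                have h4 := sum_geometric_two_le (T.sup id + 1)
                have h5 : ∑ n ∈ Finset.range (T.sup id + 1), (2⁻¹:ℝ) ^ n ≤ 2 := by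
                  rw [show (2⁻¹:ℝ) = 1/2 by norm_num]
                  exact h4
                linarith
            _ = 1 := by norm_num
        nlinarith [hεr0]
      calc b ^ s ≤ ∑ n ∈ T, (D n + 2 * δ n) ^ s := hsum2
        _ ≤ ∑ n ∈ T, ((D n) ^ s + εr * 2⁻¹ ^ (n+1)) := Finset.sum_le_sum h1
        _ = (∑ n ∈ T, (D n) ^ s) + ∑ n ∈ T, εr * 2⁻¹ ^ (n+1) := Finset.sum_add_distrib
        _ ≤ _ := by linarith
    calc ENNReal.ofReal (b ^ s)
        ≤ ENNReal.ofReal ((∑ n ∈ T, (D n) ^ s) + εr) := ENNReal.ofReal_le_ofReal hsum3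
      _ ≤ ENNReal.ofReal (∑ n ∈ T, (D n) ^ s) + ENNReal.ofReal εr := ENNReal.ofReal_add_le
      _ = (∑ n ∈ T, ENNReal.ofReal ((D n) ^ s)) + ENNReal.ofReal εr := by
          rw [ENNReal.ofReal_sum_of_nonneg (fun n _ => Real.rpow_nonneg (hD0 n) s)]
      _ = (∑ n ∈ T, Metric.ediam (t n) ^ s) + ENNReal.ofReal εr := by
          congr 1
          exact Finset.sum_congr rfl fun n _ => by
            rw [hDdiam n, ENNReal.ofReal_rpow_of_nonneg (hD0 n) hs0.le]
      _ ≤ (∑' n, Metric.ediam (t n) ^ s) + ENNReal.ofReal εr :=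
          add_le_add_left (ENNReal.sum_le_tsum T) _
      _ = (∑' n, Metric.ediam (t n) ^ s) + ε := by rw [hεr, ENNReal.ofReal_coe_nnreal]
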